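/- Let B be a standard F-Brownian motion, let E be a continuous finite F-time-change with E_0 = 0 satisfying lim_{t→∞} E_t = ∞ and lim_{t→∞} E_t/t = 0 almost surely, and let x_0 > 0, σ > 0, μ ∈ ℝ. Define X_t := x_0 exp{ ρ t + (μ − σ²/2) E_t + σ B_{E_t} }. If ρ > 0, then X_t → ∞ almost surely as t → ∞; if ρ < 0, then X_t → 0 almost surely as t → ∞. -/

import Mathlib

open MeasureTheory Filter Topology Set ProbabilityTheory
open scoped NNReal ENNReal

namespace TimeChangePaper

variable {Ω : Type*} {m : MeasurableSpace Ω}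

/-- A real-valued process has càdlàg paths: right-continuous with left limits. -/
def CadlagPaths (Z : ℝ → Ω → ℝ) : Prop :=
  ∀ ω : Ω, ∀ t : ℝ,
    Tendsto (fun s => Z s ω) (nhdsWithin t (Set.Ioi t)) (nhds (Z t ω)) ∧
    ∃ l : ℝ, Tendsto (fun s => Z s ω) (nhdsWithin t (Set.Iio t)) (nhds l)

/-- A real-valued process has càglàd paths: left-continuous with right limits. -/
def CagladPaths (H : ℝ → Ω → ℝ) : Prop :=
  ∀ ω : Ω, ∀ t : ℝ,
    Tendsto (fun s => H s ω) (nhdsWithin t (Set.Iio t)) (nhds (H t ω)) ∧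
    ∃ l : ℝ, Tendsto (fun s => H s ω) (nhdsWithin t (Set.Ioi t)) (nhds l)

/-- Left limit of the path of `Z` at time `t`. -/
noncomputable def leftLimP (Z : ℝ → Ω → ℝ) (t : ℝ) (ω : Ω) : ℝ :=
  Function.leftLim (fun s => Z s ω) t

/-- Jump of the path of `Z` at time `t`. -/
noncomputable def jumpP (Z : ℝ → Ω → ℝ) (t : ℝ) (ω : Ω) : ℝ :=
  Z t ω - leftLimP Z t ω

/-- Sum of the values `g s ω` over the (at most countably many nonzero) times
`s ∈ (0, t]`; used for sums of jump contributions `Σ_{0 < s ≤ t} g s ω`. -/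
noncomputable def jumpSum (g : ℝ → Ω → ℝ) (t : ℝ) (ω : Ω) : ℝ :=
  ∑' s : ℝ, Set.indicator (Set.Ioc (0:ℝ) t) (fun u => g u ω) s

/-- An `(F_t)`-time-change: a càdlàg, nondecreasing, nonnegative family of
(ℝ-valued, hence automatically finite) stopping times. -/
structure IsTimeChange (F : Filtration ℝ m) (T : ℝ → Ω → ℝ) : Prop where
  mono : ∀ ω, Monotone fun t => T t ω
  nonneg : ∀ ω t, 0 ≤ T t ω
  cadlag : CadlagPaths T
  stopping : ∀ t : ℝ, IsStoppingTime F (fun ω => (T t ω : WithTop ℝ))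

/-- `Z` is in synchronization with the time-change `T`: almost surely, `Z` is
constant on every interval `[T_{t-}, T_t]`. -/
def Synchronized (P : Measure Ω) (Z T : ℝ → Ω → ℝ) : Prop :=
  ∀ᵐ ω ∂P, ∀ t : ℝ, 0 ≤ t → ∀ u ∈ Set.Icc (leftLimP T t ω) (T t ω),
    ∀ v ∈ Set.Icc (leftLimP T t ω) (T t ω), Z u ω = Z v ω

/-- Local martingale: there is a localizing sequence of stopping times increasing
to infinity such that each stopped process is a martingale. -/
def IsLocalMartingale (F : Filtration ℝ m) (P : Measure Ω) (M : ℝ → Ω → ℝ) : Prop :=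
  ∃ τ : ℕ → Ω → ℝ, (∀ n, IsStoppingTime F (fun ω => (τ n ω : WithTop ℝ))) ∧
    (∀ᵐ ω ∂P, Tendsto (fun n => τ n ω) atTop atTop) ∧
    ∀ n, Martingale (MeasureTheory.stoppedProcess M (fun ω => (τ n ω : WithTop ℝ))) F P

/-- `Z` is an `F`-semimartingale: a càdlàg adapted process which is the sum of a
càdlàg local martingale and a càdlàg adapted process of finite variation on compacts. -/
def IsSemimartingale (F : Filtration ℝ m) (P : Measure Ω) (Z : ℝ → Ω → ℝ) : Prop :=
  CadlagPaths Z ∧ Adapted F Z ∧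
  ∃ M A : ℝ → Ω → ℝ,
    IsLocalMartingale F P M ∧ CadlagPaths M ∧
    CadlagPaths A ∧ Adapted F A ∧
    (∀ ω, ∀ a b : ℝ, BoundedVariationOn (fun s => A s ω) (Set.Icc a b)) ∧
    ∀ᵐ ω ∂P, ∀ t, Z t ω = M t ω + A t ω

/-- The predictable σ-algebra on `ℝ × Ω`, generated by the left-open stochastic
intervals `(s,t] × A` with `A ∈ F_s`, together with `{0} × A` with `A ∈ F_0`. -/
def predictableSigma (F : Filtration ℝ m) : MeasurableSpace (ℝ × Ω) :=
  MeasurableSpace.generateFrom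
    ({C : Set (ℝ × Ω) | ∃ s t : ℝ, ∃ A : Set Ω,
        s ≤ t ∧ MeasurableSet[F s] A ∧ C = Set.Ioc s t ×ˢ A} ∪
     {C : Set (ℝ × Ω) | ∃ A : Set Ω, MeasurableSet[F 0] A ∧ C = ({0} : Set ℝ) ×ˢ A})

/-- A process is `F`-predictable if it is measurable w.r.t. the predictable σ-algebra. -/
def Predictable (F : Filtration ℝ m) (H : ℝ → Ω → ℝ) : Prop :=
  @Measurable (ℝ × Ω) ℝ (predictableSigma F) _ fun p => H p.1 p.2

/-- Mesh of the partition `π` truncated to `[0, t]`. -/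
noncomputable def mesh (π : ℕ → ℝ) (t : ℝ) : ℝ :=
  ⨆ k : ℕ, (min (π (k + 1)) t - min (π k) t)

/-- `I` is (a version of) the Itô-type stochastic integral `t ↦ ∫_0^t H_s dZ_s`:
for every `t ≥ 0` and every deterministic sequence of partitions of `[0, ∞)` whose
mesh on `[0, t]` tends to `0`, the left-endpoint Riemann sums converge in
probability to `I_t`. -/
def IsStochIntegral (P : Measure Ω) (H Z I : ℝ → Ω → ℝ) : Prop :=
  ∀ t : ℝ, 0 ≤ t → ∀ π : ℕ → ℕ → ℝ,
    (∀ n, π n 0 = 0) → (∀ n, Monotone (π n)) →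
    (∀ n, Tendsto (fun k => π n k) atTop atTop) →
    Tendsto (fun n => mesh (π n) t) atTop (nhds 0) →
    TendstoInMeasure P
      (fun n ω => ∑' k : ℕ, H (π n k) ω * (Z (min (π n (k + 1)) t) ω - Z (min (π n k) t) ω))
      atTop (fun ω => I t ω)

/-- First hitting time process (generalized inverse) of the process `S`:
`T_t = inf {u > 0 : S_u > t}`. -/
noncomputable def hittingTimeOf (S : ℝ → Ω → ℝ) (t : ℝ) (ω : Ω) : ℝ :=
  sInf {u : ℝ | 0 < u ∧ t < S u ω}

/-- `D` and `E` are dual: either `E` is the first hitting time process of `D`, or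
`D` is the first hitting time process of `E`. -/
def DualPair (D E : ℝ → Ω → ℝ) : Prop :=
  (∀ t : ℝ, 0 ≤ t → ∀ ω, E t ω = hittingTimeOf D t ω) ∨
  (∀ t : ℝ, 0 ≤ t → ∀ ω, D t ω = hittingTimeOf E t ω)

/-- The pair of a strictly increasing semimartingale `D` (with `D_0 = 0`,
`lim D_t = ∞`) and a continuous time-change `E` (with `E_0 = 0`, `lim E_t = ∞`),
each inducing the other as its first hitting time process. -/
structure IsDualPair (F : Filtration ℝ m) (P : Measure Ω) (D E : ℝ → Ω → ℝ) : Prop where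
  semimartD : IsSemimartingale F P D
  strictMonoD : ∀ ω, StrictMonoOn (fun t => D t ω) (Set.Ici (0:ℝ))
  zeroD : ∀ ω, ∀ t ≤ (0:ℝ), D t ω = 0
  infD : ∀ᵐ ω ∂P, Tendsto (fun t => D t ω) atTop atTop
  timeChangeE : IsTimeChange F E
  contE : ∀ ω, Continuous fun t => E t ω
  zeroE : ∀ ω, ∀ t ≤ (0:ℝ), E t ω = 0
  infE : ∀ᵐ ω ∂P, Tendsto (fun t => E t ω) atTop atTop
  dual : DualPair D E

/-- Right-continuity of the filtration (part of the usual conditions). -/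
def RightContinuousFiltration (F : Filtration ℝ m) : Prop :=
  ∀ t : ℝ, (F t : MeasurableSpace Ω) = ⨅ (s : ℝ) (_ : t < s), F s

/-- Completeness of the filtration w.r.t. `P` (part of the usual conditions). -/
def CompleteFiltration (F : Filtration ℝ m) (P : Measure Ω) : Prop :=
  ∀ t : ℝ, ∀ N : Set Ω, P N = 0 → ∀ N' ⊆ N, MeasurableSet[F t] N'

/-- A standard `F`-Brownian motion: continuous adapted paths started at `0`, with
Gaussian increments `B_t - B_s ~ N(0, t-s)` independent of `F_s`. -/
def IsBrownianMotion (F : Filtration ℝ m) (P : Measure Ω) (B : ℝ → Ω → ℝ) : Prop :=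
  (∀ ω, ∀ t ≤ (0:ℝ), B t ω = 0) ∧
  (∀ ω, Continuous fun t => B t ω) ∧
  Adapted F B ∧
  ∀ s t : ℝ, 0 ≤ s → s ≤ t →
    P.map (fun ω => B t ω - B s ω) = ProbabilityTheory.gaussianReal 0 (Real.toNNReal (t - s)) ∧
    ProbabilityTheory.Indep
      (MeasurableSpace.comap (fun ω => B t ω - B s ω) inferInstance) (F s) P


set_option linter.unusedSectionVars false

noncomputable def c1 : ℝ := ∫ x, |x| ∂(gaussianReal 0 1)

lemma gauss_abs_integrable (v : ℝ≥0) : Integrable (fun x => |x|) (gaussianReal 0 v) := by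
  by_cases hv : v = 0
  · rw [hv, gaussianReal_zero_var]
    refine ⟨measurable_abs.aestronglyMeasurable, ?_⟩
    rw [HasFiniteIntegral, lintegral_dirac]
    simp
  · rw [gaussianReal_of_var_ne_zero _ hv,
      integrable_withDensity_iff (measurable_gaussianPDF _ _) (ae_of_all _ fun x => ENNReal.ofReal_lt_top)]
    have hb : (0:ℝ) < (2 * (v:ℝ))⁻¹ := by positivity
    have : (fun x : ℝ => |x| * (gaussianPDF 0 v x).toReal)
        = fun x : ℝ => (√(2 * Real.pi * v))⁻¹ * |x * Real.exp (-(2 * (v:ℝ))⁻¹ * x ^ 2)| := by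
      ext x
      rw [gaussianPDF, ENNReal.toReal_ofReal (gaussianPDFReal_nonneg _ _ _), gaussianPDFReal]
      rw [abs_mul, abs_of_nonneg (Real.exp_pos _).le]
      have : -(x - 0) ^ 2 / (2 * (v:ℝ)) = -(2 * (v:ℝ))⁻¹ * x ^ 2 := by
        field_simp
        ring
      rw [this]; ring
    rw [this]
    exact ((integrable_mul_exp_neg_mul_sq hb).abs).const_mul _

lemma gauss_id_integrable (v : ℝ≥0) : Integrable (fun x : ℝ => x) (gaussianReal 0 v) := by
  refine (gauss_abs_integrable v).mono' measurable_id.aestronglyMeasurable ?_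
  exact ae_of_all _ fun x => by simp [Real.norm_eq_abs]

lemma gauss_id_integral_zero (v : ℝ≥0) : ∫ x, x ∂(gaussianReal 0 v) = 0 := by
  have hmap : (gaussianReal 0 v).map (fun x : ℝ => (-1) * x) = gaussianReal 0 v := by
    rw [gaussianReal_map_const_mul]
    norm_num
  have h := integral_map (μ := gaussianReal 0 v)
      (φ := fun x : ℝ => (-1 : ℝ) * x) (measurable_const_mul _).aemeasurable
      (f := fun x : ℝ => x) measurable_id.aestronglyMeasurable
  rw [hmap] at h
  simp only [neg_one_mul] at h
  rw [integral_neg] at h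
  linarith

lemma gauss_abs_integral (t : ℝ) (ht : 0 ≤ t) :
    ∫ x, |x| ∂(gaussianReal 0 t.toNNReal) = Real.sqrt t * c1 := by
  have hmap : (gaussianReal 0 1).map (fun x : ℝ => Real.sqrt t * x) = gaussianReal 0 t.toNNReal := by
    rw [gaussianReal_map_const_mul]
    norm_num
    congr 1
    ext
    simp [Real.sq_sqrt ht, Real.coe_toNNReal _ ht]
  rw [← hmap, integral_map (measurable_const_mul _).aemeasurable
      (measurable_abs).aestronglyMeasurable]
  simp only [abs_mul, abs_of_nonneg (Real.sqrt_nonneg t)]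
  rw [integral_const_mul]
  rfl

lemma c1_nonneg : 0 ≤ c1 := integral_nonneg fun x => abs_nonneg x

variable {F : Filtration ℝ m} {P : Measure Ω} [IsProbabilityMeasure P] {B : ℝ → Ω → ℝ}

lemma BM.meas (hB : IsBrownianMotion F P B) (t : ℝ) : Measurable (B t) :=
  Measurable.le (F.le t) (hB.2.2.1 t)

lemma BM.law (hB : IsBrownianMotion F P B) (t : ℝ) (ht : 0 ≤ t) :
    P.map (B t) = gaussianReal 0 t.toNNReal := by
  have h := (hB.2.2.2 0 t le_rfl ht).1
  have : (fun ω => B t ω - B 0 ω) = B t := by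
    ext ω; rw [hB.1 ω 0 le_rfl, sub_zero]
  rwa [this, sub_zero] at h

lemma BM.integrable (hB : IsBrownianMotion F P B) (t : ℝ) (ht : 0 ≤ t) :
    Integrable (B t) P := by
  have h : Integrable (fun x : ℝ => x) (P.map (B t)) := by
    rw [BM.law hB t ht]; exact gauss_id_integrable _
  exact (integrable_map_measure measurable_id.aestronglyMeasurable
    (BM.meas hB t).aemeasurable).1 h

lemma BM.abs_integral (hB : IsBrownianMotion F P B) (t : ℝ) (ht : 0 ≤ t) :
    ∫ ω, |B t ω| ∂P = Real.sqrt t * c1 := by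
  rw [← gauss_abs_integral t ht, ← BM.law hB t ht,
    integral_map (BM.meas hB t).aemeasurable measurable_abs.aestronglyMeasurable]

lemma BM.inc_meas (hB : IsBrownianMotion F P B) (s t : ℝ) :
    Measurable (fun ω => B t ω - B s ω) := (BM.meas hB t).sub (BM.meas hB s)

lemma BM.inc_integrable (hB : IsBrownianMotion F P B) (s t : ℝ) (hs : 0 ≤ s) (hst : s ≤ t) :
    Integrable (fun ω => B t ω - B s ω) P := by
  have h : Integrable (fun x : ℝ => x) (P.map (fun ω => B t ω - B s ω)) := by
    rw [(hB.2.2.2 s t hs hst).1]; exact gauss_id_integrable _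
  exact (integrable_map_measure measurable_id.aestronglyMeasurable
    (BM.inc_meas hB s t).aemeasurable).1 h

lemma BM.inc_integral_zero (hB : IsBrownianMotion F P B) (s t : ℝ) (hs : 0 ≤ s) (hst : s ≤ t) :
    ∫ ω, (B t ω - B s ω) ∂P = 0 := by
  have := integral_map (μ := P) (BM.inc_meas hB s t).aemeasurable
    (f := fun x : ℝ => x) measurable_id.aestronglyMeasurable
  rw [(hB.2.2.2 s t hs hst).1, gauss_id_integral_zero] at this
  exact this.symm

/-- martingale along a monotone nonneg time sequence -/
lemma BM.martingale_along (hB : IsBrownianMotion F P B) (u : ℕ → ℝ) (hu : Monotone u)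
    (hu0 : 0 ≤ u 0) :
    Martingale (fun i ω => B (u i) ω)
      (Filtration.mk (fun i => F (u i)) (fun i j hij => F.mono (hu hij)) (fun i => F.le _)) P := by
  set G := Filtration.mk (fun i : ℕ => F (u i)) (fun i j hij => F.mono (hu hij)) (fun i => F.le _)
  have hpos : ∀ i, 0 ≤ u i := fun i => hu0.trans (hu (Nat.zero_le i))
  refine martingale_nat (fun i => (hB.2.2.1 (u i)).stronglyMeasurable) (fun i => BM.integrable hB _ (hpos i)) ?_
  intro i
  have hdec : (fun ω => B (u (i+1)) ω) = (fun ω => B (u i) ω)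
      + (fun ω => B (u (i+1)) ω - B (u i) ω) := by ext ω; simp
  have hle : u i ≤ u (i + 1) := hu (Nat.le_succ i)
  have hint1 : Integrable (B (u i)) P := BM.integrable hB _ (hpos i)
  have hint2 : Integrable (fun ω => B (u (i+1)) ω - B (u i) ω) P :=
    BM.inc_integrable hB _ _ (hpos i) hle
  have hcond : P[fun ω => B (u (i+1)) ω - B (u i) ω | G i]
      =ᵐ[P] fun _ => ∫ ω, (B (u (i+1)) ω - B (u i) ω) ∂P := by
    refine condExp_indep_eq ((BM.inc_meas hB _ _).comap_le) (F.le (u i)) ?_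
      (hB.2.2.2 (u i) (u (i+1)) (hpos i) hle).2
    exact Measurable.stronglyMeasurable (Measurable.of_comap_le le_rfl)
  calc (fun ω => B (u i) ω) =ᵐ[P] fun ω => B (u i) ω + 0 := by simp
    _ =ᵐ[P] (P[fun ω => B (u i) ω | G i]) + (P[fun ω => B (u (i+1)) ω - B (u i) ω | G i]) := by
        refine EventuallyEq.add ?_ ?_
        · exact Filter.EventuallyEq.of_eq
            (condExp_of_stronglyMeasurable (F.le (u i)) (hB.2.2.1 (u i)).stronglyMeasurable hint1).symm
        · rw [BM.inc_integral_zero hB _ _ (hpos i) hle] at hcond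
          exact hcond.symm
    _ =ᵐ[P] P[fun ω => B (u (i+1)) ω | G i] := by
        rw [hdec]
        exact (condExp_add hint1 hint2 (G i)).symm

lemma BM.doob_bound (hB : IsBrownianMotion F P B) (T : ℝ) (hT : 1 ≤ T) :
    P {ω | ∃ s ∈ Icc (0:ℝ) T, T < |B s ω|}
      ≤ ENNReal.ofReal (Real.sqrt T * c1 / T) := by
  have hT0 : (0:ℝ) < T := lt_of_lt_of_le one_pos hT
  set g : ℕ → ℕ → ℝ := fun j i => min ((i : ℝ) * (T / 2 ^ j)) T with hg
  have hc : ∀ j : ℕ, (0:ℝ) < T / 2 ^ j := fun j => by positivity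
  have hg_mono : ∀ j, Monotone (g j) := by
    intro j i k hik
    exact min_le_min (mul_le_mul_of_nonneg_right (Nat.cast_le.2 hik) (hc j).le) le_rfl
  have hg_nonneg : ∀ j i, 0 ≤ g j i := fun j i => le_min (by positivity) hT0.le
  have hg_top : ∀ j, g j (2 ^ j) = T := by
    intro j
    have h2 : ((2:ℝ) ^ j) ≠ 0 := by positivity
    have : ((2 ^ j : ℕ) : ℝ) * (T / 2 ^ j) = T := by push_cast; field_simp
    rw [hg]; simp only [this, min_self]
  -- the submartingale of absolute values
  have habs : ∀ j, Submartingale (fun i ω => |B (g j i) ω|)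
      (Filtration.mk (fun i => F (g j i)) (fun i k hik => F.mono (hg_mono j hik))
        (fun i => F.le _)) P := by
    intro j
    have hm := BM.martingale_along hB (g j) (hg_mono j) (hg_nonneg j 0)
    have h1 := (hm.submartingale.sup hm.neg.submartingale)
    have : (fun i ω => |B (g j i) ω|)
        = ((fun i ω => B (g j i) ω) ⊔ (-(fun i ω => B (g j i) ω))) := by
      funext i ω
      simp only [Pi.sup_apply, Pi.neg_apply, abs_eq_max_neg]
    rw [this]
    exact h1
  set A : ℕ → Set Ω := fun j => {ω | T ≤ (Finset.range (2 ^ j + 1)).sup'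
      Finset.nonempty_range_add_one fun k => |B (g j k) ω|} with hA
  -- Doob bound for each level
  have hbound : ∀ j, P (A j) ≤ ENNReal.ofReal (Real.sqrt T * c1) / ENNReal.ofReal T := by
    intro j
    have hdoob := maximal_ineq (hsub := habs j)
      (hnonneg := fun i ω => abs_nonneg _) (ε := T.toNNReal) (n := 2 ^ j)
    have hcoe : ((T.toNNReal : ℝ)) = T := Real.coe_toNNReal _ hT0.le
    rw [hcoe] at hdoob
    have hset : {ω | T ≤ (Finset.range (2 ^ j + 1)).sup'
        Finset.nonempty_range_add_one fun k => |B (g j k) ω|} = A j := rfl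
    have hS : ∫ ω in A j, |B (g j (2 ^ j)) ω| ∂P ≤ Real.sqrt T * c1 := by
      rw [hg_top j]
      have := setIntegral_le_integral (s := A j) ((BM.integrable hB T hT0.le).abs)
        (ae_of_all _ fun ω => abs_nonneg _)
      rwa [BM.abs_integral hB T hT0.le] at this
    have h2 : ENNReal.ofReal T * P (A j) ≤ ENNReal.ofReal (Real.sqrt T * c1) := by
      calc ENNReal.ofReal T * P (A j) ≤ ENNReal.ofReal (∫ ω in A j, |B (g j (2 ^ j)) ω| ∂P) := by
            exact hdoob
        _ ≤ ENNReal.ofReal (Real.sqrt T * c1) := ENNReal.ofReal_le_ofReal hS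
    rw [ENNReal.le_div_iff_mul_le (Or.inl (by simp [hT0])) (Or.inl ENNReal.ofReal_ne_top)]
    rwa [mul_comm]
  -- monotonicity of A
  have hAmono : Monotone A := by
    refine monotone_nat_of_le_succ fun j => ?_
    intro ω hω
    obtain ⟨k, hk, hke⟩ := Finset.exists_mem_eq_sup' (s := Finset.range (2 ^ j + 1))
      Finset.nonempty_range_add_one (fun k => |B (g j k) ω|)
    simp only [hA, mem_setOf_eq] at hω
    rw [hke] at hω
    have hk' : k ≤ 2 ^ j := Nat.lt_succ_iff.1 (Finset.mem_range.1 hk)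
    have hgg : g j k = g (j + 1) (2 * k) := by
      have : ((k : ℝ)) * (T / 2 ^ j) = ((2 * k : ℕ) : ℝ) * (T / 2 ^ (j + 1)) := by
        push_cast
        field_simp
        ring
      rw [hg]; simp only [this]
    have hmem : 2 * k ∈ Finset.range (2 ^ (j + 1) + 1) := by
      refine Finset.mem_range.2 (Nat.lt_succ_iff.2 ?_)
      calc 2 * k ≤ 2 * 2 ^ j := Nat.mul_le_mul_left _ hk'
        _ = 2 ^ (j + 1) := (pow_succ' 2 j).symm
    refine le_trans ?_ (Finset.le_sup' (fun k => |B (g (j+1) k) ω|) hmem)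
    rw [← hgg]
    exact hω
  -- covering
  have hcover : {ω | ∃ s ∈ Icc (0:ℝ) T, T < |B s ω|} ⊆ ⋃ j, A j := by
    rintro ω ⟨s, ⟨hs0, hsT⟩, hBs⟩
    have hcont : Continuous fun u => |B u ω| := (hB.2.1 ω).abs
    have hopen : IsOpen {u : ℝ | T < |B u ω|} := isOpen_lt continuous_const hcont
    obtain ⟨δ, hδ, hball⟩ := Metric.isOpen_iff.1 hopen s hBs
    obtain ⟨j, hj⟩ := pow_unbounded_of_one_lt (T / δ) (one_lt_two (α := ℝ))
    have hcδ : T / 2 ^ j < δ := by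
      rw [div_lt_iff₀ (by positivity)]
      rw [div_lt_iff₀ hδ] at hj
      calc T < 2 ^ j * δ := hj
        _ = δ * 2 ^ j := mul_comm _ _
    set c := T / 2 ^ j with hcdef
    set i := ⌊s / c⌋₊ with hi
    have hsc : 0 ≤ s / c := div_nonneg hs0 (hc j).le
    have h1 : (i : ℝ) * c ≤ s := by
      rw [← le_div_iff₀ (hc j)]
      exact Nat.floor_le hsc
    have h2 : s < ((i : ℝ) + 1) * c := by
      rw [← div_lt_iff₀ (hc j)]
      exact Nat.lt_floor_add_one _
    have hilt : (i : ℝ) ≤ 2 ^ j := by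
      refine le_trans (Nat.floor_le hsc) ?_
      rw [div_le_iff₀ (hc j)]
      calc s ≤ T := hsT
        _ = 2 ^ j * (T / 2 ^ j) := by field_simp
    have hgi : g j i = (i : ℝ) * c := min_eq_left (le_trans h1 hsT)
    have hdist : dist ((i : ℝ) * c) s < δ := by
      rw [Real.dist_eq, abs_sub_comm, abs_of_nonneg (by linarith)]
      have : s - (i : ℝ) * c < c := by nlinarith
      linarith
    have hmemball : ((i : ℝ) * c) ∈ {u : ℝ | T < |B u ω|} := hball hdist
    refine mem_iUnion.2 ⟨j, ?_⟩
    have himem : i ∈ Finset.range (2 ^ j + 1) := by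
      refine Finset.mem_range.2 (Nat.lt_succ_iff.2 ?_)
      have h3 : (i : ℝ) ≤ ((2 ^ j : ℕ) : ℝ) := by push_cast; exact hilt
      exact_mod_cast h3
    refine le_trans (le_of_lt ?_) (Finset.le_sup' (fun k => |B (g j k) ω|) himem)
    rw [hgi]
    exact hmemball
  calc P {ω | ∃ s ∈ Icc (0:ℝ) T, T < |B s ω|} ≤ P (⋃ j, A j) := measure_mono hcover
    _ = ⨆ j, P (A j) := hAmono.measure_iUnion
    _ ≤ ENNReal.ofReal (Real.sqrt T * c1) / ENNReal.ofReal T := iSup_le hbound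
    _ = ENNReal.ofReal (Real.sqrt T * c1 / T) := (ENNReal.ofReal_div_of_pos hT0).symm

lemma BM.linear_bound (hB : IsBrownianMotion F P B) :
    ∀ᵐ ω ∂P, ∃ C : ℝ, 0 ≤ C ∧ ∀ s : ℝ, 0 ≤ s → |B s ω| ≤ C * (1 + s) := by
  set bad : ℕ → Set Ω := fun k => {ω | ∃ u ∈ Icc (0:ℝ) ((2:ℝ)^k), (2:ℝ)^k < |B u ω|} with hbad
  have hsq : ∀ k : ℕ, Real.sqrt ((2:ℝ)^k) = (Real.sqrt 2)^k := by
    intro k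
    induction k with
    | zero => simp
    | succ n ih => rw [pow_succ, pow_succ, Real.sqrt_mul (by positivity), ih]
  have hgeo : ∀ k : ℕ, Real.sqrt ((2:ℝ)^k) * c1 / (2:ℝ)^k = c1 * (Real.sqrt 2 / 2)^k := by
    intro k
    rw [hsq, div_pow]
    ring
  have hr1 : Real.sqrt 2 / 2 < 1 := by
    nlinarith [Real.sq_sqrt (by norm_num : (0:ℝ) ≤ 2), Real.sqrt_nonneg 2]
  have hr0 : 0 ≤ Real.sqrt 2 / 2 := by positivity
  have hsum : ∑' k, P (bad k) ≠ ⊤ := by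
    have hle : ∀ k, P (bad k) ≤ ENNReal.ofReal (c1 * (Real.sqrt 2 / 2)^k) := by
      intro k
      have h := BM.doob_bound hB ((2:ℝ)^k) (one_le_pow₀ (by norm_num))
      rwa [hgeo k] at h
    have hS : Summable (fun k : ℕ => c1 * (Real.sqrt 2 / 2)^k) :=
      (summable_geometric_of_lt_one hr0 hr1).mul_left c1
    have hle' : ∑' k, P (bad k) ≤ ENNReal.ofReal (∑' k, c1 * (Real.sqrt 2 / 2)^k) := by
      calc ∑' k, P (bad k) ≤ ∑' k, ENNReal.ofReal (c1 * (Real.sqrt 2 / 2)^k) :=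
            ENNReal.tsum_le_tsum hle
        _ = ENNReal.ofReal (∑' k, c1 * (Real.sqrt 2 / 2)^k) :=
            (ENNReal.ofReal_tsum_of_nonneg
              (fun k => mul_nonneg c1_nonneg (pow_nonneg hr0 k)) hS).symm
    exact ne_top_of_le_ne_top ENNReal.ofReal_ne_top hle'
  filter_upwards [ae_eventually_notMem hsum] with ω hω
  obtain ⟨K, hK⟩ := eventually_atTop.1 hω
  have hK' : ∀ k, K ≤ k → ∀ u : ℝ, 0 ≤ u → u ≤ (2:ℝ)^k → |B u ω| ≤ (2:ℝ)^k := by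
    intro k hk u hu0 hu1
    have := hK k hk
    simp only [hbad, mem_setOf_eq, not_exists] at this
    by_contra hcon
    exact this u ⟨⟨hu0, hu1⟩, lt_of_not_ge hcon⟩
  refine ⟨(2:ℝ)^K + 2, by positivity, fun s hs => ?_⟩
  have hex : ∃ n : ℕ, s ≤ (2:ℝ)^(K + n) := by
    obtain ⟨n0, hn0⟩ := pow_unbounded_of_one_lt s (one_lt_two (α := ℝ))
    exact ⟨n0, hn0.le.trans (pow_le_pow_right₀ (by norm_num) (Nat.le_add_left _ _))⟩
  set n := Nat.find hex with hn
  have hsn : s ≤ (2:ℝ)^(K + n) := Nat.find_spec hex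
  have hB1 : |B s ω| ≤ (2:ℝ)^(K + n) := hK' (K + n) (Nat.le_add_right _ _) s hs hsn
  have h2K : (0:ℝ) < 2^K := by positivity
  rcases Nat.eq_zero_or_pos n with hn0 | hnpos
  · rw [hn0, Nat.add_zero] at hB1
    nlinarith
  · obtain ⟨l, hl⟩ : ∃ l, n = l + 1 := ⟨n - 1, (Nat.succ_pred_eq_of_pos hnpos).symm⟩
    have hmin : ¬ (s ≤ (2:ℝ)^(K + l)) := Nat.find_min hex (by omega)
    push_neg at hmin
    have : (2:ℝ)^(K + n) = 2 * (2:ℝ)^(K + l) := by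
      rw [hl, ← Nat.add_assoc, pow_succ]; ring
    rw [this] at hB1
    nlinarith


/-- **Example 5.1, asymptotics of the time-changed Black–Scholes
model when `E_t` is asymptotically slower than `t`.** Let `B` be a standard
`F`-Brownian motion and `E` a continuous finite `F`-time-change with
`lim_{t→∞} E_t = ∞` and `lim_{t→∞} E_t/t = 0` a.s. Let
`X_t = x_0 exp{ρt + (μ - σ²/2)E_t + σ B_{E_t}}` with `x_0 > 0`, `σ > 0`.
If `ρ > 0` then `X_t → ∞` a.s.; if `ρ < 0` then `X_t → 0` a.s. -/
theorem timeChanged_blackScholes_asymptotics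
    (F : Filtration ℝ m) (P : Measure Ω) [IsProbabilityMeasure P]
    (B E : ℝ → Ω → ℝ)
    (hB : IsBrownianMotion F P B)
    (hE : IsTimeChange F E)
    (hEcont : ∀ ω, Continuous fun t => E t ω)
    (hE0 : ∀ ω, ∀ t ≤ (0:ℝ), E t ω = 0)
    (hEinf : ∀ᵐ ω ∂P, Tendsto (fun t => E t ω) atTop atTop)
    (hEslow : ∀ᵐ ω ∂P, Tendsto (fun t => E t ω / t) atTop (nhds 0))
    (x₀ σ μ ρ : ℝ) (hx₀ : 0 < x₀) (hσ : 0 < σ)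
    (X : ℝ → Ω → ℝ)
    (hX : ∀ t ω, X t ω =
      x₀ * Real.exp (ρ * t + (μ - σ ^ 2 / 2) * E t ω + σ * B (E t ω) ω)) :
    (0 < ρ → ∀ᵐ ω ∂P, Tendsto (fun t => X t ω) atTop atTop) ∧
    (ρ < 0 → ∀ᵐ ω ∂P, Tendsto (fun t => X t ω) atTop (nhds 0)) := by
  classical
  have main : ∀ᵐ ω ∂P,
      (0 < ρ → Tendsto (fun t => X t ω) atTop atTop) ∧
      (ρ < 0 → Tendsto (fun t => X t ω) atTop (nhds 0)) := by
    filter_upwards [BM.linear_bound hB, hEslow] with ω hCb hSlow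
    obtain ⟨C, hC0, hC⟩ := hCb
    set a : ℝ := μ - σ ^ 2 / 2 with ha
    set g : ℝ → ℝ := fun t => ρ * t + a * E t ω + σ * B (E t ω) ω with hgdef
    have hEnn : ∀ t : ℝ, 0 ≤ E t ω := fun t => hE.nonneg ω t
    have hbnd : Tendsto (fun t : ℝ => |σ| * C * (1 / t + E t ω / t)) atTop (nhds 0) := by
      have hinv : Tendsto (fun t : ℝ => 1 / t) atTop (nhds (0:ℝ)) := by
        simpa [one_div] using tendsto_inv_atTop_zero
      have h0 : Tendsto (fun t : ℝ => 1 / t + E t ω / t) atTop (nhds ((0:ℝ) + 0)) :=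
        hinv.add hSlow
      have h1 := h0.const_mul (|σ| * C)
      simpa using h1
    have hBpart : Tendsto (fun t : ℝ => σ * B (E t ω) ω / t) atTop (nhds 0) := by
      refine squeeze_zero_norm' ?_ hbnd
      filter_upwards [eventually_ge_atTop (1:ℝ)] with t ht
      have ht0 : (0:ℝ) < t := lt_of_lt_of_le one_pos ht
      have hBle : |B (E t ω) ω| ≤ C * (1 + E t ω) := hC _ (hEnn t)
      rw [Real.norm_eq_abs, abs_div, abs_of_pos ht0, abs_mul, div_le_iff₀ ht0]
      have hexp : (|σ| * C * (1 / t + E t ω / t)) * t = |σ| * (C * (1 + E t ω)) := by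
        field_simp
      rw [hexp]
      exact mul_le_mul_of_nonneg_left hBle (abs_nonneg σ)
    have hEpart : Tendsto (fun t : ℝ => a * E t ω / t) atTop (nhds 0) := by
      have h1 := hSlow.const_mul a
      simpa [mul_div_assoc] using h1
    have hquot : Tendsto (fun t : ℝ => g t / t) atTop (nhds ρ) := by
      have hsum : Tendsto (fun t : ℝ => ρ + (a * E t ω / t + σ * B (E t ω) ω / t))
          atTop (nhds (ρ + (0 + 0))) := tendsto_const_nhds.add (hEpart.add hBpart)
      have hsum' : Tendsto (fun t : ℝ => ρ + (a * E t ω / t + σ * B (E t ω) ω / t))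
          atTop (nhds ρ) := by simpa using hsum
      refine hsum'.congr' ?_
      filter_upwards [eventually_gt_atTop (0:ℝ)] with t ht
      rw [hgdef]
      field_simp
      ring
    constructor
    · intro hρ
      have hgey : ∀ᶠ t in atTop, (ρ/2) * t ≤ g t := by
        filter_upwards [hquot.eventually (eventually_ge_nhds (by linarith : ρ/2 < ρ)),
          eventually_gt_atTop (0:ℝ)] with t hq ht
        calc (ρ/2) * t ≤ (g t / t) * t := by
              exact mul_le_mul_of_nonneg_right hq ht.le
          _ = g t := by field_simp
      have hgtop : Tendsto g atTop atTop :=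
        tendsto_atTop_mono' _ hgey
          ((tendsto_id (α := ℝ)).const_mul_atTop (by linarith : (0:ℝ) < ρ/2))
      have hfin : Tendsto (fun t => x₀ * Real.exp (g t)) atTop atTop :=
        (Real.tendsto_exp_atTop.comp hgtop).const_mul_atTop hx₀
      exact hfin.congr fun t => (hX t ω).symm
    · intro hρ
      have hley : ∀ᶠ t in atTop, g t ≤ (ρ/2) * t := by
        filter_upwards [hquot.eventually (eventually_le_nhds (by linarith : ρ < ρ/2)),
          eventually_gt_atTop (0:ℝ)] with t hq ht
        calc g t = (g t / t) * t := by field_simp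
          _ ≤ (ρ/2) * t := mul_le_mul_of_nonneg_right hq ht.le
      have hgbot : Tendsto g atTop atBot := by
        refine tendsto_atBot_mono' _ hley ?_
        exact (tendsto_const_mul_atBot_of_neg (by linarith : ρ/2 < (0:ℝ))).2 tendsto_id
      have hexp0 : Tendsto (fun t => Real.exp (g t)) atTop (nhds 0) :=
        Real.tendsto_exp_atBot.comp hgbot
      have hfin : Tendsto (fun t => x₀ * Real.exp (g t)) atTop (nhds 0) := by
        have := hexp0.const_mul x₀
        simpa using this
      exact hfin.congr fun t => (hX t ω).symm
  constructor
  · intro hρ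
    filter_upwards [main] with ω hω
    exact hω.1 hρ
  · intro hρ
    filter_upwards [main] with ω hω
    exact hω.2 hρ


end TimeChangePaper
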